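/- There is no continuous function f : ℝ → ℝ with the following properties: f is periodic with period 1; there is a finite partition 0 = x₀ < x₁ < ⋯ < x_m = 1 such that f is concave on each interval [x_i, x_{i+1}]; at each partition point x_i, f has a right derivative d₊(x_i) and a left derivative d₋(x_i) with d₊(x_i) ≤ d₋(x_i); and d₊(x_j) < d₋(x_j) strictly for at least one j. (This synthesizes the paper's one-dimensional argument: the Duistermaat–Heckman function of a circle-valued momentum map is concave on each chamber with non-positive derivative jumps at walls, and a fixed-point component forces a strictly negative jump; since such a function cannot exist on all of S¹, the momentum map is not surjective and the action is Hamiltonian.) -/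
import Mathlib


open Filter Set

/-- Concavity inequality in cleared-denominator form. -/
lemma aux_concave_ineq (f : ℝ → ℝ) {a b y : ℝ} (hab : a < b)
    (hc : ConcaveOn ℝ (Icc a b) f) (hy : y ∈ Ioo a b) :
    (y - a) * f b + (b - y) * f a ≤ f y * (b - a) := by
  obtain ⟨hay, hyb⟩ := hy
  set t : ℝ := (y - a) / (b - a) with ht
  have hba : (0:ℝ) < b - a := sub_pos.2 hab
  have hya : (0:ℝ) < y - a := sub_pos.2 hay
  have ht0 : 0 ≤ t := by positivity
  have ht1 : t ≤ 1 := by rw [ht, div_le_one hba]; linarith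
  have hkey := hc.2 (right_mem_Icc.2 hab.le) (left_mem_Icc.2 hab.le) ht0
    (by linarith : (0:ℝ) ≤ 1 - t) (by ring)
  have htb : t * (b - a) = y - a := by rw [ht]; field_simp
  have htb' : (1 - t) * (b - a) = b - y := by rw [sub_mul, one_mul, htb]; ring
  have hyeq : t * b + (1 - t) * a = y := by
    have : t * b + (1 - t) * a = t * (b - a) + a := by ring
    rw [this, htb]; ring
  rw [smul_eq_mul, smul_eq_mul, smul_eq_mul, smul_eq_mul, hyeq] at hkey
  calc (y - a) * f b + (b - y) * f a
      = (t * f b + (1 - t) * f a) * (b - a) := by rw [← htb, ← htb']; ring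
    _ ≤ f y * (b - a) := mul_le_mul_of_nonneg_right hkey hba.le

lemma aux_right (f : ℝ → ℝ) {a b L : ℝ} (hab : a < b)
    (hc : ConcaveOn ℝ (Icc a b) f)
    (hL : Tendsto (fun y => (f y - f a) / (y - a)) (nhdsWithin a (Ioi a)) (nhds L)) :
    (f b - f a) / (b - a) ≤ L := by
  refine ge_of_tendsto hL ?_
  filter_upwards [Ioo_mem_nhdsGT hab] with y hy
  have h3 := aux_concave_ineq f hab hc hy
  have hba : (0:ℝ) < b - a := sub_pos.2 hab
  have hya : (0:ℝ) < y - a := sub_pos.2 hy.1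
  rw [div_le_div_iff₀ hba hya]
  nlinarith [h3]

lemma aux_left (f : ℝ → ℝ) {a b L : ℝ} (hab : a < b)
    (hc : ConcaveOn ℝ (Icc a b) f)
    (hL : Tendsto (fun y => (f y - f b) / (y - b)) (nhdsWithin b (Iio b)) (nhds L)) :
    L ≤ (f b - f a) / (b - a) := by
  refine le_of_tendsto hL ?_
  filter_upwards [Ioo_mem_nhdsLT hab] with y hy
  have h3 := aux_concave_ineq f hab hc hy
  have hba : (0:ℝ) < b - a := sub_pos.2 hab
  have hby : (0:ℝ) < b - y := sub_pos.2 hy.2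
  have hrw : (f y - f b) / (y - b) = (f b - f y) / (b - y) := by
    rw [← neg_sub (f b), ← neg_sub b, neg_div_neg_eq]
  rw [hrw, div_le_div_iff₀ hby hba]
  nlinarith [h3]

/-- There is no continuous `1`-periodic function on `ℝ` that is piecewise
concave on a finite partition `0 = x₀ < x₁ < ⋯ < x_m = 1`, with non-positive
derivative jumps `d₊(xᵢ) ≤ d₋(xᵢ)` at every partition point and a strictly
negative jump at some partition point. -/
theorem no_periodic_piecewise_concave_with_strict_jump :
    ¬ ∃ f : ℝ → ℝ, Continuous f ∧ (∀ x : ℝ, f (x + 1) = f x) ∧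
      ∃ m : ℕ, 0 < m ∧ ∃ x : ℕ → ℝ,
        x 0 = 0 ∧ x m = 1 ∧ (∀ i < m, x i < x (i + 1)) ∧
        (∀ i < m, ConcaveOn ℝ (Icc (x i) (x (i + 1))) f) ∧
        ∃ dp dm : ℕ → ℝ,
          (∀ i ≤ m, Tendsto (fun y => (f y - f (x i)) / (y - x i))
            (nhdsWithin (x i) (Ioi (x i))) (nhds (dp i))) ∧
          (∀ i ≤ m, Tendsto (fun y => (f y - f (x i)) / (y - x i))
            (nhdsWithin (x i) (Iio (x i))) (nhds (dm i))) ∧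
          (∀ i ≤ m, dp i ≤ dm i) ∧
          (∃ j ≤ m, dp j < dm j) := by
  rintro ⟨f, hf, hper, m, hm, x, hx0, hxm, hlt, hconc, dp, dm, hdp, hdm, hle, j, hj, hstrict⟩
  have hf10 : f 1 = f 0 := by simpa using hper 0
  have hfshift : ∀ y : ℝ, f (y - 1) = f y := fun y => by
    have := hper (y - 1); simpa using this.symm
  have heq : ∀ y : ℝ, (f (y - 1) - f (x 0)) / ((y - 1) - x 0)
      = (f y - f (x m)) / (y - x m) := by
    intro y
    rw [hx0, hxm, hfshift, hf10, sub_zero]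
  -- the shift map sends 1⁺ to 0⁺ and 1⁻ to 0⁻
  have hsub : Tendsto (fun y : ℝ => y - 1) (nhds (1:ℝ)) (nhds (0:ℝ)) := by
    have hc : Continuous (fun y : ℝ => y - 1) := by continuity
    simpa using hc.tendsto 1
  have hmapp : Tendsto (fun y : ℝ => y - 1) (nhdsWithin 1 (Ioi 1)) (nhdsWithin 0 (Ioi 0)) := by
    refine tendsto_nhdsWithin_of_tendsto_nhds_of_eventually_within _
      (hsub.mono_left nhdsWithin_le_nhds) ?_
    exact eventually_nhdsWithin_of_forall fun y hy => by
      simp only [mem_Ioi] at *; linarith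
  have hmapm : Tendsto (fun y : ℝ => y - 1) (nhdsWithin 1 (Iio 1)) (nhdsWithin 0 (Iio 0)) := by
    refine tendsto_nhdsWithin_of_tendsto_nhds_of_eventually_within _
      (hsub.mono_left nhdsWithin_le_nhds) ?_
    exact eventually_nhdsWithin_of_forall fun y hy => by
      simp only [mem_Iio] at *; linarith
  have hdpm : dp m = dp 0 := by
    have h1 : Tendsto (fun y => (f y - f (x m)) / (y - x m))
        (nhdsWithin (x m) (Ioi (x m))) (nhds (dp 0)) := by
      rw [hxm]
      have h0 := hdp 0 (Nat.zero_le m)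
      rw [hx0] at h0
      exact (h0.comp hmapp).congr fun y => by
        have := heq y; rw [hx0, hxm] at this; simpa using this
    exact tendsto_nhds_unique (hdp m le_rfl) h1
  have hdmm : dm m = dm 0 := by
    have h1 : Tendsto (fun y => (f y - f (x m)) / (y - x m))
        (nhdsWithin (x m) (Iio (x m))) (nhds (dm 0)) := by
      rw [hxm]
      have h0 := hdm 0 (Nat.zero_le m)
      rw [hx0] at h0
      exact (h0.comp hmapm).congr fun y => by
        have := heq y; rw [hx0, hxm] at this; simpa using this
    exact tendsto_nhds_unique (hdm m le_rfl) h1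
  -- the chain inequality
  have hstep : ∀ i < m, dm (i + 1) ≤ dp i := by
    intro i hi
    have hab := hlt i hi
    have hc := hconc i hi
    have h1 := aux_left f hab hc (hdm (i + 1) hi)
    have h2 := aux_right f hab hc (hdp i hi.le)
    linarith
  have hanti : ∀ k, k ≤ m → ∀ i, i ≤ k → dp k ≤ dp i := by
    intro k
    induction k with
    | zero => intro _ i hi; interval_cases i; exact le_rfl
    | succ n ih =>
      intro hn i hi
      rcases Nat.lt_or_ge i (n + 1) with h | h
      · have h1 : dp (n + 1) ≤ dm (n + 1) := hle (n + 1) hn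
        have h2 : dm (n + 1) ≤ dp n := hstep n (by omega)
        have h3 : dp n ≤ dp i := ih (by omega) i (by omega)
        linarith
      · have : i = n + 1 := by omega
        rw [this]
  -- reduce to a jump at 1 ≤ j ≤ m
  obtain ⟨j, hj1, hjm, hstrict⟩ : ∃ j, 1 ≤ j ∧ j ≤ m ∧ dp j < dm j := by
    rcases Nat.eq_zero_or_pos j with h0 | h1
    · exact ⟨m, hm, le_rfl, by rw [hdpm, hdmm]; subst h0; exact hstrict⟩
    · exact ⟨j, h1, hj, hstrict⟩
  obtain ⟨k, rfl⟩ : ∃ k, j = k + 1 := ⟨j - 1, by omega⟩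
  have h1 : dm (k + 1) ≤ dp k := hstep k (by omega)
  have h2 : dp k ≤ dp 0 := hanti k (by omega) 0 (Nat.zero_le k)
  have h3 : dp m ≤ dp (k + 1) := hanti m le_rfl (k + 1) hjm
  rw [hdpm] at h3
  linarith
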